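/- Let R be a commutative ring and let I be a nilpotent ideal of R. For each non-negative integer i, let B_i be a subset of I^{2^i} such that B_i ∪ I^{2^{i+1}} generates I^{2^i} as an additive group. Then every element of the form 1 + b with b ∈ ⋃_i B_i is a unit of R, the set 1 + I = {1 + x : x ∈ I} is a subgroup of Rˣ, and 1 + I is generated as a group by the elements 1 + b with b ∈ ⋃_i B_i. -/

import Mathlib

/-- Lemma `wecalledthisa`: let `I` be a nilpotent ideal of a commutative ring `R`,
and for each `i ≥ 0` let `B_i ⊆ I^{2^i}` be such that `B_i ∪ I^{2^{i+1}}` generates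
`I^{2^i}` as an additive group. Then every `1 + b` with `b ∈ ⋃_i B_i` is a unit,
the set `1 + I` is a subgroup of `Rˣ`, and it is generated by the `1 + b`. -/
theorem stmt_15 {R : Type*} [CommRing R] (I : Ideal R) (hI : IsNilpotent I)
    (B : ℕ → Set R) (hBsub : ∀ i, B i ⊆ (I ^ (2 ^ i) : Ideal R))
    (hBgen : ∀ i, AddSubgroup.closure (B i ∪ ((I ^ (2 ^ (i + 1)) : Ideal R) : Set R)) =
      (I ^ (2 ^ i)).toAddSubgroup) :
    (∀ i, ∀ b ∈ B i, IsUnit (1 + b)) ∧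
    (∀ x ∈ I, IsUnit (1 + x)) ∧
    {u : Rˣ | ∃ x ∈ I, (u : R) = 1 + x} =
      (Subgroup.closure {u : Rˣ | ∃ i, ∃ b ∈ B i, (u : R) = 1 + b} : Set Rˣ) := by
  obtain ⟨N, hN⟩ := hI
  have hnil : ∀ x ∈ I, IsNilpotent x := by
    intro x hx
    refine ⟨N, ?_⟩
    have h := Ideal.pow_mem_pow hx N
    rw [hN] at h
    simpa using h
  have hunit : ∀ x ∈ I, IsUnit (1 + x) := fun x hx => (hnil x hx).isUnit_one_add
  set C := Subgroup.closure {u : Rˣ | ∃ i, ∃ b ∈ B i, (u : R) = 1 + b} with hCdef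
  have key : ∀ d i, N ≤ 2 ^ (i + d) → ∀ x ∈ (I ^ (2 ^ i) : Ideal R),
      ∃ u : Rˣ, (u : R) = 1 + x ∧ u ∈ C := by
    intro d
    induction d with
    | zero =>
      intro i hi x hx
      have hx0 : x = 0 := by
        have h := Ideal.pow_le_pow_right (by simpa using hi) hx
        rw [hN] at h
        simpa using h
      exact ⟨1, by simp [hx0], one_mem C⟩
    | succ d ih =>
      intro i hi x hx
      have hih : ∀ y ∈ (I ^ (2 ^ (i + 1)) : Ideal R),
          ∃ u : Rˣ, (u : R) = 1 + y ∧ u ∈ C := by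
        refine ih (i + 1) ?_
        rw [show i + 1 + d = i + (d + 1) by omega]
        exact hi
      have hmul2 : ∀ a b : R, a ∈ (I ^ (2 ^ i) : Ideal R) → b ∈ (I ^ (2 ^ i) : Ideal R) →
          a * b ∈ (I ^ (2 ^ (i + 1)) : Ideal R) := by
        intro a b ha hb
        have h := Ideal.mul_mem_mul ha hb
        rwa [← pow_add, show 2 ^ i + 2 ^ i = 2 ^ (i + 1) by ring] at h
      have hx' : x ∈ AddSubgroup.closure (B i ∪ ((I ^ (2 ^ (i + 1)) : Ideal R) : Set R)) := by
        rw [hBgen i]; exact hx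
      refine (AddSubgroup.closure_induction
        (p := fun y _ => y ∈ (I ^ (2 ^ i) : Ideal R) ∧ ∃ u : Rˣ, (u : R) = 1 + y ∧ u ∈ C)
        ?_ ?_ ?_ ?_ hx').2
      · rintro y (hy | hy)
        · refine ⟨hBsub i hy, ?_⟩
          obtain ⟨u, hu⟩ :=
            hunit y (Ideal.pow_le_self (by positivity) (hBsub i hy))
          exact ⟨u, hu, Subgroup.subset_closure ⟨i, y, hy, hu⟩⟩
        · refine ⟨Ideal.pow_le_pow_right (Nat.pow_le_pow_right (by norm_num) (Nat.le_succ i)) hy,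
            hih y hy⟩
      · exact ⟨zero_mem _, 1, by simp, one_mem C⟩
      · rintro a b _ _ ⟨haI, u, hu, huC⟩ ⟨hbI, v, hv, hvC⟩
        refine ⟨add_mem haI hbI, ?_⟩
        obtain ⟨t, ht, htC⟩ := hih (-(a * b) * ((u * v)⁻¹ : Rˣ))
          (Ideal.mul_mem_right _ _ (neg_mem (hmul2 a b haI hbI)))
        refine ⟨u * v * t, ?_, mul_mem (mul_mem huC hvC) htC⟩
        have hw : ((u * v : Rˣ) : R) = 1 + (a + b) + a * b := by
          rw [Units.val_mul, hu, hv]; ring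
        calc ((u * v * t : Rˣ) : R) = ((u * v : Rˣ) : R) * t := by rw [Units.val_mul]
          _ = ((u * v : Rˣ) : R) * (1 + -(a * b) * ((u * v)⁻¹ : Rˣ)) := by rw [ht]
          _ = ((u * v : Rˣ) : R) - a * b * (((u * v : Rˣ) : R) * ((u * v)⁻¹ : Rˣ)) := by ring
          _ = 1 + (a + b) := by rw [Units.mul_inv, hw]; ring
      · rintro a _ ⟨haI, u, hu, huC⟩
        refine ⟨neg_mem haI, ?_⟩
        obtain ⟨t, ht, htC⟩ := hih (-(a * a)) (neg_mem (hmul2 a a haI haI))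
        refine ⟨u⁻¹ * t, ?_, mul_mem (inv_mem huC) htC⟩
        calc ((u⁻¹ * t : Rˣ) : R) = ((u⁻¹ : Rˣ) : R) * t := by rw [Units.val_mul]
          _ = ((u⁻¹ : Rˣ) : R) * ((u : R) * (1 + -a)) := by rw [ht, hu]; ring
          _ = (((u⁻¹ : Rˣ) : R) * u) * (1 + -a) := by ring
          _ = 1 + -a := by rw [Units.inv_mul, one_mul]
  have key0 : ∀ x ∈ I, ∃ u : Rˣ, (u : R) = 1 + x ∧ u ∈ C := by
    intro x hx
    refine key N 0 (by simpa using (Nat.lt_two_pow_self (n := N)).le) x ?_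
    simpa using hx
  refine ⟨fun i b hb => hunit b (Ideal.pow_le_self (by positivity) (hBsub i hb)), hunit, ?_⟩
  ext u
  simp only [Set.mem_setOf_eq, SetLike.mem_coe]
  constructor
  · rintro ⟨x, hx, hux⟩
    obtain ⟨v, hv, hvC⟩ := key0 x hx
    have huv : u = v := Units.ext (by rw [hux, hv])
    rwa [huv]
  · intro hu
    rw [hCdef] at hu
    refine Subgroup.closure_induction
      (p := fun (v : Rˣ) _ => ∃ x ∈ I, (v : R) = 1 + x) ?_ ?_ ?_ ?_ hu
    · rintro v ⟨i, b, hb, hvb⟩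
      exact ⟨b, Ideal.pow_le_self (by positivity) (hBsub i hb), hvb⟩
    · exact ⟨0, zero_mem I, by simp⟩
    · rintro a b _ _ ⟨x, hx, hax⟩ ⟨y, hy, hby⟩
      refine ⟨x + y + x * y, add_mem (add_mem hx hy) (Ideal.mul_mem_right _ _ hx), ?_⟩
      rw [Units.val_mul, hax, hby]; ring
    · rintro a _ ⟨x, hx, hax⟩
      refine ⟨-x * ((a⁻¹ : Rˣ) : R), Ideal.mul_mem_right _ _ (neg_mem hx), ?_⟩
      have h1 : ((a : R) - x) = 1 := by rw [hax]; ring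
      calc ((a⁻¹ : Rˣ) : R) = ((a : R) - x) * ((a⁻¹ : Rˣ) : R) := by rw [h1, one_mul]
        _ = (a : R) * ((a⁻¹ : Rˣ) : R) - x * ((a⁻¹ : Rˣ) : R) := by ring
        _ = 1 + -x * ((a⁻¹ : Rˣ) : R) := by rw [Units.mul_inv]; ring
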